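/- If p is a prime with p ≡ 3 (mod 4), then Σ_{j=0}^{(p−1)/2} 2^j · binom((p−1)/2, j)² ≡ 0 (mod p). -/

import Mathlib

open Finset

/-- Binomial theorem corollary: `∑ C(N,i) (-2)^i = (-1)^N`. -/
lemma binom_neg_two {R : Type*} [CommRing R] (N : ℕ) :
    ∑ i ∈ range (N + 1), ((N.choose i : R)) * (-2) ^ i = (-1) ^ N := by
  have h := add_pow (-2 : R) 1 N
  simp only [one_pow, mul_one] at h
  norm_num at h
  rw [h]
  exact Finset.sum_congr rfl fun i _ => by ring

/-- `P_n(-3) = (-1)^n P_n(3)` in expanded form, over any commutative ring. -/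
lemma key (R : Type*) [CommRing R] (n : ℕ) :
    ∑ j ∈ range (n + 1), (n.choose j : R) * ((n + j).choose j : R) * (-2) ^ j
      = (-1) ^ n * ∑ j ∈ range (n + 1), (n.choose j : R) ^ 2 * 2 ^ j := by
  have hv : ∀ j : ℕ, ((n + j).choose j : R)
      = ∑ k ∈ range (j + 1), (n.choose k : R) * (j.choose k : R) := by
    intro j
    rw [Nat.add_choose_eq, Finset.Nat.sum_antidiagonal_eq_sum_range_succ_mk]
    push_cast
    refine Finset.sum_congr rfl fun k hk => ?_
    rw [Nat.choose_symm (Nat.lt_succ_iff.mp (mem_range.mp hk))]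
  have haux : ∀ k ≤ n, ∑ j ∈ range (n + 1), ((n.choose j * j.choose k : ℕ) : R) * (-2) ^ j
      = (n.choose k : R) * (-2) ^ k * (-1) ^ (n - k) := by
    intro k hk
    rw [range_eq_Ico, ← Finset.sum_Ico_consecutive _ (Nat.zero_le k) (by omega : k ≤ n + 1)]
    have h1 : ∑ j ∈ Finset.Ico 0 k, ((n.choose j * j.choose k : ℕ) : R) * (-2) ^ j = 0 := by
      refine Finset.sum_eq_zero fun j hj => ?_
      have : j.choose k = 0 := Nat.choose_eq_zero_of_lt (Finset.mem_Ico.mp hj).2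
      simp [this]
    rw [h1, zero_add, Finset.sum_Ico_eq_sum_range]
    have hnk : n + 1 - k = n - k + 1 := by omega
    rw [hnk]
    have h2 : ∀ i ∈ range (n - k + 1),
        ((n.choose (k + i) * (k + i).choose k : ℕ) : R) * (-2) ^ (k + i)
          = (n.choose k : R) * (-2) ^ k * (((n - k).choose i : R) * (-2) ^ i) := by
      intro i hi
      have hi' : i < n - k + 1 := mem_range.mp hi
      have hkn : k + i ≤ n := by omega
      have := Nat.choose_mul (n := n) (Nat.le_add_right k i)
      rw [Nat.add_sub_cancel_left] at this
      rw [this]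
      push_cast
      rw [pow_add]
      ring
    rw [Finset.sum_congr rfl h2, ← Finset.mul_sum, binom_neg_two]
  calc ∑ j ∈ range (n + 1), (n.choose j : R) * ((n + j).choose j : R) * (-2) ^ j
      = ∑ j ∈ range (n + 1), ∑ k ∈ range (n + 1),
          (n.choose k : R) * (((n.choose j * j.choose k : ℕ) : R) * (-2) ^ j) := by
        refine Finset.sum_congr rfl fun j hj => ?_
        have hj' : j + 1 ≤ n + 1 := by
          have := mem_range.mp hj; omega
        rw [hv j, Finset.mul_sum, Finset.sum_mul]
        rw [← Finset.sum_subset (Finset.range_subset_range.mpr hj')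
          (fun k _ hk => by
            have : j < k := by
              simp only [mem_range, not_lt] at hk
              omega
            have hz : j.choose k = 0 := Nat.choose_eq_zero_of_lt this
            simp [hz])]
        refine Finset.sum_congr rfl fun k hk => ?_
        push_cast
        ring
    _ = ∑ k ∈ range (n + 1), ∑ j ∈ range (n + 1),
          (n.choose k : R) * (((n.choose j * j.choose k : ℕ) : R) * (-2) ^ j) :=
        Finset.sum_comm
    _ = ∑ k ∈ range (n + 1), (n.choose k : R) *
          ((n.choose k : R) * (-2) ^ k * (-1) ^ (n - k)) := by
        refine Finset.sum_congr rfl fun k hk => ?_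
        rw [← Finset.mul_sum, haux k (Nat.lt_succ_iff.mp (mem_range.mp hk))]
    _ = (-1) ^ n * ∑ j ∈ range (n + 1), (n.choose j : R) ^ 2 * 2 ^ j := by
        rw [Finset.mul_sum]
        refine Finset.sum_congr rfl fun k hk => ?_
        have hkn : k ≤ n := Nat.lt_succ_iff.mp (mem_range.mp hk)
        have hpow : (-2 : R) ^ k * (-1) ^ (n - k) = (-1) ^ n * 2 ^ k := by
          have : ((-1 : R) * 2) ^ k * (-1) ^ (n - k) = (-1) ^ n * 2 ^ k := by
            rw [mul_pow, mul_assoc, mul_comm ((2:R)^k), ← mul_assoc, ← pow_add,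
              Nat.add_sub_cancel' hkn]
          simpa using this
        rw [mul_assoc, hpow]
        ring
/-- The key congruence `C(m,j) ≡ (-1)^j C(m+j,j) (mod p)` when `p = 2m+1`. -/
lemma cong (p m : ℕ) [Fact p.Prime] (hm : 2 * m + 1 = p) :
    ∀ j, j ≤ m → ((m.choose j : ZMod p)) = (-1) ^ j * ((m + j).choose j : ZMod p) := by
  have hz : (2 * (m : ZMod p) + 1) = 0 := by
    have : ((2 * m + 1 : ℕ) : ZMod p) = 0 := by rw [hm]; exact ZMod.natCast_self p
    push_cast at this
    exact this
  intro j
  induction j with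
  | zero => simp
  | succ j ih =>
    intro hj
    have hj' : j ≤ m := Nat.le_of_succ_le hj
    have h1 := ih hj'
    have hcanc : (((j + 1 : ℕ)) : ZMod p) ≠ 0 := by
      rw [Ne, ZMod.natCast_eq_zero_iff]
      intro hdvd
      have := Nat.le_of_dvd (by omega) hdvd
      omega
    have castA : (m.choose (j + 1) : ZMod p) * ((j + 1 : ℕ) : ZMod p)
        = (m.choose j : ZMod p) * ((m : ZMod p) - (j : ZMod p)) := by
      have := Nat.choose_succ_right_eq m j
      have hc : ((m.choose (j + 1) * (j + 1) : ℕ) : ZMod p)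
          = ((m.choose j * (m - j) : ℕ) : ZMod p) := by rw [this]
      push_cast [Nat.cast_sub hj'] at hc
      push_cast
      exact hc
    have castB : ((m : ZMod p) + j + 1) * ((m + j).choose j : ZMod p)
        = ((m + j + 1).choose (j + 1) : ZMod p) * ((j + 1 : ℕ) : ZMod p) := by
      have := Nat.add_one_mul_choose_eq (m + j) j
      have hc : ((Nat.succ (m + j) * (m + j).choose j : ℕ) : ZMod p)
          = (((m + j + 1).choose (j + 1) * (j + 1) : ℕ) : ZMod p) := by
        rw [this]
      push_cast at hc
      push_cast
      linear_combination hc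
    apply mul_right_cancel₀ hcanc
    have hmj : (m + (j + 1)) = (m + j + 1) := by omega
    rw [hmj, castA]
    have hneg : (m : ZMod p) - (j : ZMod p) = -((m : ZMod p) + j + 1) := by
      linear_combination hz
    rw [hneg, h1]
    push_cast
    push_cast at castB
    linear_combination -(-1 : ZMod p) ^ j * castB

theorem stmt3 (p : ℕ) (hp : p.Prime) (hp4 : p % 4 = 3) :
    (∑ j ∈ range ((p - 1) / 2 + 1), 2 ^ j * ((p - 1) / 2).choose j ^ 2) ≡ 0 [MOD p] := by
  haveI := Fact.mk hp
  have hp3 : 3 ≤ p := by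
    rcases Nat.lt_or_ge p 3 with h | h
    · interval_cases p <;> omega
    · exact h
  set m := (p - 1) / 2 with hmdef
  have hm : 2 * m + 1 = p := by omega
  have hmodd : Odd m := by
    rw [Nat.odd_iff]; omega
  suffices h : ((∑ j ∈ range (m + 1), 2 ^ j * m.choose j ^ 2 : ℕ) : ZMod p) = 0 by
    exact Nat.modEq_zero_iff_dvd.mpr ((ZMod.natCast_eq_zero_iff _ p).mp h)
  push_cast
  set S : ZMod p := ∑ j ∈ range (m + 1), (m.choose j : ZMod p) ^ 2 * 2 ^ j with hS
  have hgoal : (∑ j ∈ range (m + 1), (2 : ZMod p) ^ j * (m.choose j : ZMod p) ^ 2) = S := by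
    rw [hS]
    exact Finset.sum_congr rfl fun j _ => by ring
  rw [hgoal]
  have hT : ∑ j ∈ range (m + 1), (m.choose j : ZMod p) * ((m + j).choose j : ZMod p) * (-2) ^ j
      = S := by
    rw [hS]
    refine Finset.sum_congr rfl fun j hj => ?_
    have hjm : j ≤ m := Nat.lt_succ_iff.mp (mem_range.mp hj)
    have h2 := cong p m hm j hjm
    have h2' : ((m + j).choose j : ZMod p) = (-1) ^ j * (m.choose j : ZMod p) := by
      rw [h2, ← mul_assoc, ← mul_pow]
      norm_num
    rw [h2']
    calc (m.choose j : ZMod p) * ((-1) ^ j * (m.choose j : ZMod p)) * (-2) ^ j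
        = (m.choose j : ZMod p) ^ 2 * ((-1) * (-2)) ^ j := by rw [mul_pow]; ring
      _ = (m.choose j : ZMod p) ^ 2 * 2 ^ j := by norm_num
  have hkey := key (ZMod p) m
  rw [hT, Odd.neg_one_pow hmodd] at hkey
  have h2S : (2 : ZMod p) * S = 0 := by linear_combination hkey
  have h2ne : (2 : ZMod p) ≠ 0 := by
    have : ((2 : ℕ) : ZMod p) ≠ 0 := by
      rw [Ne, ZMod.natCast_eq_zero_iff]
      intro hdvd
      have := Nat.le_of_dvd (by omega) hdvd
      omega
    simpa using this
  exact (mul_eq_zero.mp h2S).resolve_left h2ne
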